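/- Define φ(s,x,m) := −xm − m·log m + κ(s)·m for s ∈ [0,T], x ∈ ℝ, m > 0, where κ(s) = −∫_s^T (1/2)(μ(t)/σ(t))² dt with μ, σ continuous and σ nowhere zero. Define the second-order operator (with θ₀ = −μ(s)/σ(s) and w = μ(s)/σ(s)²): Aφ(s,x,m) = ∂_s φ + wμ(s)∂_x φ + (1/2)w²σ(s)²∂²_{xx}φ + (1/2)m²θ₀²∂²_{mm}φ + wθ₀mσ(s)∂²_{xm}φ. Then Aφ(s,x,m) = 0 for all (s,x,m) in the domain, and φ(T,x,m) = −xm − m log m. -/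

import Mathlib

/-- The candidate value function φ(s,x,m) = −xm − m log m + κ(s)m, with
κ(s) = −∫_s^T (1/2)(μ/σ)² dt, solves the HJBI equation at the optimal controls
θ̂₀(s) = −μ(s)/σ(s), ŵ(s) = μ(s)/σ(s)², and satisfies the terminal condition. -/
theorem hjbi_verification_entropic (T : ℝ) (hT : 0 < T) (μ σ : ℝ → ℝ)
    (hμ : Continuous μ) (hσ : Continuous σ) (hσ0 : ∀ s, σ s ≠ 0)
    (κ : ℝ → ℝ) (hκ : ∀ s, κ s = -(∫ t in s..T, (1 / 2) * (μ t / σ t) ^ 2))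
    (φ : ℝ → ℝ → ℝ → ℝ)
    (hφ : ∀ s x m, φ s x m = -x * m - m * Real.log m + κ s * m) :
    ∀ s ∈ Set.Icc (0 : ℝ) T, ∀ x : ℝ, ∀ m : ℝ, 0 < m →
      (deriv (fun s' => φ s' x m) s
        + (μ s / σ s ^ 2) * μ s * deriv (fun x' => φ s x' m) x
        + (1 / 2) * (μ s / σ s ^ 2) ^ 2 * σ s ^ 2
            * deriv (deriv (fun x' => φ s x' m)) x
        + (1 / 2) * m ^ 2 * (-μ s / σ s) ^ 2
            * deriv (deriv (fun m' => φ s x m')) m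
        + (μ s / σ s ^ 2) * (-μ s / σ s) * m * σ s
            * deriv (fun m' => deriv (fun x' => φ s x' m') x) m = 0) ∧
      φ T x m = -x * m - m * Real.log m := by
  intro s hs x m hm
  set f : ℝ → ℝ := fun t => (1 / 2) * (μ t / σ t) ^ 2 with hf_def
  have hf : Continuous f := continuous_const.mul ((hμ.div hσ hσ0).pow 2)
  -- x-derivative at any point, for any m'
  have hx : ∀ (m' x' : ℝ), HasDerivAt (fun x'' => φ s x'' m') (-m') x' := by
    intro m' x'
    have h : HasDerivAt (fun y : ℝ => -(id y * m') - m' * Real.log m' + κ s * m')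
        (-(1 * m')) x' :=
      (((hasDerivAt_id x').mul_const m').neg.sub_const (m' * Real.log m')).add_const (κ s * m')
    have heq : (fun x'' => φ s x'' m')
        = fun y : ℝ => -(id y * m') - m' * Real.log m' + κ s * m' := by
      funext y; simp only [id]; rw [hφ]; ring
    rw [heq, show (-m' : ℝ) = -(1 * m') by ring]
    exact h
  have hderivx : ∀ m' : ℝ, deriv (fun x'' => φ s x'' m') x = -m' :=
    fun m' => (hx m' x).deriv
  constructor
  · -- compute all five derivatives
    have h1 : deriv (fun s' => φ s' x m) s = f s * m := by
      have heq : (fun s' => φ s' x m)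
          = fun s' => (∫ t in T..s', f t) * m + (-x * m - m * Real.log m) := by
        funext s'
        rw [hφ, hκ, intervalIntegral.integral_symm]
        ring
      rw [heq]
      have h := (((hf.integral_hasStrictDerivAt T s).hasDerivAt.mul_const m).add_const
        (-x * m - m * Real.log m))
      exact h.deriv
    have h2 : deriv (fun x' => φ s x' m) x = -m := hderivx m
    have h3 : deriv (deriv (fun x' => φ s x' m)) x = 0 := by
      have : deriv (fun x' => φ s x' m) = fun _ => -m := by
        funext x'; exact (hx m x').deriv
      rw [this, deriv_const]
    -- m-derivative function near m
    have hgm : ∀ m' : ℝ, 0 < m' →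
        HasDerivAt (fun m'' => φ s x m'') (-x - Real.log m' - 1 + κ s) m' := by
      intro m' hm'
      have h : HasDerivAt (fun y : ℝ => -x * id y - y * Real.log y + κ s * id y)
          (-x * 1 - (Real.log m' + 1) + κ s * 1) m' :=
        (((hasDerivAt_id m').const_mul (-x)).sub
          (Real.hasDerivAt_mul_log hm'.ne')).add ((hasDerivAt_id m').const_mul (κ s))
      have heq : (fun m'' => φ s x m'')
          = fun y : ℝ => -x * id y - y * Real.log y + κ s * id y := by
        funext y; simp only [id]; rw [hφ]
      rw [heq, show -x - Real.log m' - 1 + κ s = -x * 1 - (Real.log m' + 1) + κ s * 1 by ring]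
      exact h
    have h5 : deriv (fun m' => deriv (fun x' => φ s x' m') x) m = -1 := by
      have heq : (fun m' => deriv (fun x' => φ s x' m') x) = fun m' => -m' := by
        funext m'; exact (hx m' x).deriv
      rw [heq]
      simpa using ((hasDerivAt_id m).neg).deriv

    have h4 : deriv (deriv (fun m' => φ s x m')) m = -(1 / m) := by
      have hev : deriv (fun m' => φ s x m')
          =ᶠ[nhds m] fun m' => -x - Real.log m' - 1 + κ s := by
        filter_upwards [IsOpen.mem_nhds isOpen_Ioi hm] with m' hm'
        exact (hgm m' hm').deriv
      rw [hev.deriv_eq]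
      have h := ((((hasDerivAt_const m (-x)).sub (Real.hasDerivAt_log hm.ne')).sub_const
        1).add_const (κ s))
      have := h.deriv
      rw [show deriv (fun m' => -x - Real.log m' - 1 + κ s) m = 0 - m⁻¹ from this]; field_simp; ring
    rw [h1, h2, h3, h4, h5, hf_def]
    have hσs := hσ0 s
    field_simp
    ring
  · rw [hφ, hκ, intervalIntegral.integral_same]
    ring
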